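/- Let X be a geodesic space and f : X → ℝ a 1-convex function attaining minima: if p minimizes f_x = Σᵢ xᵢ fⁱ and q minimizes f_y = Σᵢ yᵢ fⁱ, where each fⁱ is 1-convex and L-Lipschitz on a set containing the geodesic [pq], and x, y lie in the standard simplex, then dist(p, q) ≤ L·‖x − y‖₁. -/

import Mathlib

open Set Metric Finset

def UnitSpeedOn {X : Type*} [MetricSpace X] (γ : ℝ → X) (L : ℝ) : Prop :=
  ∀ s ∈ Set.Icc (0:ℝ) L, ∀ t ∈ Set.Icc (0:ℝ) L, dist (γ s) (γ t) = |s - t|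

def GeodesicSpace (X : Type*) [MetricSpace X] : Prop :=
  ∀ x y : X, ∃ γ : ℝ → X, γ 0 = x ∧ γ (dist x y) = y ∧ UnitSpeedOn γ (dist x y)

def OneConvex {X : Type*} [MetricSpace X] (f : X → ℝ) : Prop :=
  ∀ (γ : ℝ → X) (L : ℝ), UnitSpeedOn γ L →
    ConvexOn ℝ (Set.Icc 0 L) (fun t => f (γ t) - t ^ 2 / 2)

lemma convexOn_finset_sum {ι : Type*} (t : Finset ι) {s : Set ℝ} (hs : Convex ℝ s)
    (g : ι → ℝ → ℝ) (h : ∀ i ∈ t, ConvexOn ℝ s (g i)) :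
    ConvexOn ℝ s (fun z => ∑ i ∈ t, g i z) := by
  classical
  induction t using Finset.induction with
  | empty => simpa using convexOn_const 0 hs
  | @insert a u hi ih =>
    simp only [Finset.sum_insert hi]
    exact (h a (Finset.mem_insert_self a u)).add
      (ih fun i hiu => h i (Finset.mem_insert_of_mem hiu))

/-- If `g` is 1-convex along a unit-speed geodesic `γ` on `[0,d]` and `γ 0` minimizes
`g ∘ γ` on `[0,d]`, then `g (γ d) - g (γ 0) ≥ (1-λ) d²/2` for all `λ ∈ (0,1]`. -/
lemma min_growth {g : ℝ → ℝ} {d : ℝ} (hd : 0 < d)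
    (hc : ConvexOn ℝ (Set.Icc 0 d) (fun t => g t - t ^ 2 / 2))
    (hmin : ∀ u ∈ Set.Icc (0:ℝ) d, g 0 ≤ g u)
    {l : ℝ} (hl0 : 0 < l) (hl1 : l ≤ 1) :
    (1 - l) * d ^ 2 / 2 ≤ g d - g 0 := by
  have h0 : (0:ℝ) ∈ Set.Icc (0:ℝ) d := ⟨le_refl _, hd.le⟩
  have hdm : d ∈ Set.Icc (0:ℝ) d := ⟨hd.le, le_refl _⟩
  have ha : (0:ℝ) ≤ 1 - l := by linarith
  have hab : (1 - l) + l = 1 := by ring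
  have hkey := hc.2 h0 hdm ha hl0.le hab
  simp only [smul_eq_mul, mul_zero, zero_add] at hkey
  have hmem : l * d ∈ Set.Icc (0:ℝ) d := by
    constructor
    · positivity
    · nlinarith
  have hmin' := hmin (l * d) hmem
  -- g 0 - (l d)²/2 ≤ g (l d) - (l d)²/2 ≤ (1-l)(g 0 - 0) + l (g d - d²/2)
  have : g 0 - (l * d) ^ 2 / 2 ≤ (1 - l) * (g 0 - 0 ^ 2 / 2) + l * (g d - d ^ 2 / 2) := by
    calc g 0 - (l * d) ^ 2 / 2 ≤ g (l * d) - (l * d) ^ 2 / 2 := by linarith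
      _ ≤ _ := hkey
  have hstep : l * ((1 - l) * d ^ 2 / 2) ≤ l * (g d - g 0) := by nlinarith
  exact le_of_mul_le_mul_left hstep hl0

theorem barycentric_lipschitz_estimate {X : Type*} [MetricSpace X]
    (hgeo : GeodesicSpace X) (k : ℕ) (f : Fin (k + 1) → X → ℝ)
    (hconv : ∀ i, OneConvex (f i)) (L : NNReal)
    (x y : Fin (k + 1) → ℝ)
    (hx : x ∈ stdSimplex ℝ (Fin (k + 1))) (hy : y ∈ stdSimplex ℝ (Fin (k + 1)))
    (p q : X)
    (hp : ∀ z : X, ∑ i, x i * f i p ≤ ∑ i, x i * f i z)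
    (hq : ∀ z : X, ∑ i, y i * f i q ≤ ∑ i, y i * f i z)
    (hLip : ∃ γ : ℝ → X, γ 0 = p ∧ γ (dist p q) = q ∧ UnitSpeedOn γ (dist p q) ∧
      ∀ i, LipschitzOnWith L (f i) (γ '' Set.Icc 0 (dist p q))) :
    dist p q ≤ L * ∑ i, |x i - y i| := by
  obtain ⟨γ, hγ0, hγd, hus, hlip⟩ := hLip
  set d := dist p q with hd
  rcases eq_or_lt_of_le (dist_nonneg : (0:ℝ) ≤ d) with hd0 | hd0
  · rw [hd, ← hd0]; positivity
  -- the reversed geodesic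
  set γ' : ℝ → X := fun t => γ (d - t) with hγ'
  have hus' : UnitSpeedOn γ' d := by
    intro s hs t ht
    have := hus (d - s) ⟨by linarith [hs.2], by linarith [hs.1]⟩
      (d - t) ⟨by linarith [ht.2], by linarith [ht.1]⟩
    simp only [hγ'] at *
    rw [this]
    rw [abs_sub_comm]
    congr 1; ring
  -- convexity of weighted sums along a unit-speed curve
  have hwconv : ∀ (w : Fin (k + 1) → ℝ), (∀ i, 0 ≤ w i) → (∑ i, w i) = 1 →
      ∀ (c : ℝ → X), UnitSpeedOn c d →
      ConvexOn ℝ (Set.Icc 0 d) (fun t => (∑ i, w i * f i (c t)) - t ^ 2 / 2) := by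
    intro w hw0 hw1 c hc
    have heq : (fun t => (∑ i, w i * f i (c t)) - t ^ 2 / 2)
        = fun t => ∑ i, w i * (f i (c t) - t ^ 2 / 2) := by
      funext t
      simp only [mul_sub, Finset.sum_sub_distrib, ← Finset.sum_mul, hw1, one_mul]
    rw [heq]
    exact convexOn_finset_sum _ (convex_Icc 0 d) _
      (fun i _ => ((hconv i) c d hc).smul (hw0 i))
  -- growth estimate for x-weights (min at p = γ 0)
  have hxgrow : ∀ l : ℝ, 0 < l → l ≤ 1 →
      (1 - l) * d ^ 2 / 2 ≤ (∑ i, x i * f i q) - (∑ i, x i * f i p) := by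
    intro l hl0 hl1
    have := min_growth hd0 (hwconv x (fun i => hx.1 i) hx.2 γ hus)
      (fun u _ => by rw [hγ0]; exact hp (γ u)) hl0 hl1
    simpa [hγ0, hγd, ← hd] using this
  -- growth estimate for y-weights (min at q = γ' 0)
  have hygrow : ∀ l : ℝ, 0 < l → l ≤ 1 →
      (1 - l) * d ^ 2 / 2 ≤ (∑ i, y i * f i p) - (∑ i, y i * f i q) := by
    intro l hl0 hl1
    have := min_growth hd0 (hwconv y (fun i => hy.1 i) hy.2 γ' hus')
      (fun u _ => by
        show ∑ i, y i * f i (γ (d - 0)) ≤ _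
        rw [sub_zero, hγd]; exact hq (γ' u)) hl0 hl1
    have h0 : γ' 0 = q := by simp [hγ', hγd]
    have h1 : γ' d = p := by simp [hγ', hγ0]
    simpa [h0, h1, ← hd] using this
  -- pass to the limit: d² ≤ S
  set S := ((∑ i, x i * f i q) - (∑ i, x i * f i p)) +
    ((∑ i, y i * f i p) - (∑ i, y i * f i q)) with hS
  have hSd : d ^ 2 ≤ S := by
    have hε : ∀ ε : ℝ, 0 < ε → d ^ 2 ≤ S + ε := by
      intro ε hε
      set l := min 1 (ε / d ^ 2) with hl
      have hd2 : 0 < d ^ 2 := by positivity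
      have hl0 : 0 < l := lt_min one_pos (by positivity)
      have hl1 : l ≤ 1 := min_le_left _ _
      have h1 := hxgrow l hl0 hl1
      have h2 := hygrow l hl0 hl1
      have hld : l * d ^ 2 ≤ ε := by
        calc l * d ^ 2 ≤ (ε / d ^ 2) * d ^ 2 :=
              mul_le_mul_of_nonneg_right (min_le_right _ _) hd2.le
          _ = ε := by have : d ≠ 0 := hd0.ne'; field_simp
      nlinarith
    by_contra hcon
    push_neg at hcon
    have := hε ((d ^ 2 - S) / 2) (by linarith)
    linarith
  -- Lipschitz bound on S
  have hSb : S ≤ (L : ℝ) * d * ∑ i, |x i - y i| := by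
    have hterm : ∀ i, (x i - y i) * (f i q - f i p) ≤ |x i - y i| * ((L : ℝ) * d) := by
      intro i
      have hpmem : p ∈ γ '' Set.Icc 0 d := ⟨0, ⟨le_refl _, hd0.le⟩, hγ0⟩
      have hqmem : q ∈ γ '' Set.Icc 0 d := ⟨d, ⟨hd0.le, le_refl _⟩, hγd⟩
      have hli := (hlip i).dist_le_mul q hqmem p hpmem
      rw [Real.dist_eq] at hli
      have hdqp : dist q p = d := by rw [dist_comm]
      rw [hdqp] at hli
      calc (x i - y i) * (f i q - f i p) ≤ |(x i - y i) * (f i q - f i p)| := le_abs_self _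
        _ = |x i - y i| * |f i q - f i p| := abs_mul _ _
        _ ≤ |x i - y i| * ((L : ℝ) * d) :=
            mul_le_mul_of_nonneg_left hli (abs_nonneg _)
    calc S = ∑ i, (x i - y i) * (f i q - f i p) := by
          rw [hS]
          rw [← Finset.sum_sub_distrib, ← Finset.sum_sub_distrib, ← Finset.sum_add_distrib]
          congr 1; funext i; ring
      _ ≤ ∑ i, |x i - y i| * ((L : ℝ) * d) := Finset.sum_le_sum fun i _ => hterm i
      _ = (L : ℝ) * d * ∑ i, |x i - y i| := by
          rw [← Finset.sum_mul]; ring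
    -- done
  -- conclude
  have : d * d ≤ d * ((L : ℝ) * ∑ i, |x i - y i|) := by
    have := hSd.trans hSb
    nlinarith
  exact le_of_mul_le_mul_left this hd0
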